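/- Let M be a compact manifold and X a C¹ vector field. If X is separating, then X has collinear C¹-centralizer: for every C¹ vector field Y with [X,Y]=0 and every x ∈ M, the span of X(x) and Y(x) has dimension at most 1. -/

import Mathlib

open Manifold Filter Topology Set Module

section Aux

variable
  {E : Type*} [NormedAddCommGroup E] [NormedSpace ℝ E]
  {H : Type*} [TopologicalSpace H] {I : ModelWithCorners ℝ E H}
  {M : Type*} [TopologicalSpace M] [ChartedSpace H M] [IsManifold I (⊤ : ℕ∞) M]

/-- Derivative in an arbitrary chart of an integral-curve-like curve. -/
lemma hasDerivAt_extChartAt_comp' {v : (x : M) → TangentSpace I x} {γ : ℝ → M} {x₀ : M} {t : ℝ}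
    (hγ : HasMFDerivAt 𝓘(ℝ, ℝ) I γ t ((1 : ℝ →L[ℝ] ℝ).smulRight <| v (γ t)))
    (hsrc : γ t ∈ (chartAt H x₀).source) :
    HasDerivAt ((extChartAt I x₀) ∘ γ)
      (tangentCoordChange I (γ t) x₀ (γ t) (v (γ t))) t := by
  rw [hasDerivAt_iff_hasFDerivAt]
  apply hasMFDerivAt_iff_hasFDerivAt.mp
  apply (HasMFDerivAt.comp t (hasMFDerivAt_extChartAt (I := I) hsrc) hγ).congr_mfderiv
  erw [mfderiv_chartAt_eq_tangentCoordChange hsrc]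
  refine ContinuousLinearMap.ext fun a => ?_
  exact map_smul (tangentCoordChange I (γ t) x₀ (γ t)) (show ℝ from a) (v (γ t))

lemma continuousOn_tangentRep {Y : (x : M) → TangentSpace I x}
    (hYc : Continuous (fun x => (⟨x, Y x⟩ : TangentBundle I M))) (z₀ : M) :
    ContinuousOn (fun z => tangentCoordChange I z z₀ z (Y z) : M → E) (chartAt H z₀).source := by
  have h1 : ContinuousOn (fun z => (trivializationAt E (TangentSpace I) z₀
      (⟨z, Y z⟩ : TangentBundle I M)).2) (chartAt H z₀).source := by
    apply continuous_snd.comp_continuousOn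
    apply (trivializationAt E (TangentSpace I) z₀).continuousOn.comp hYc.continuousOn
    intro z hz
    rw [Bundle.Trivialization.mem_source]
    exact hz
  exact h1.congr fun z hz => rfl

end Aux

section Calc

variable {E : Type*} [NormedAddCommGroup E] [NormedSpace ℝ E]

lemma seq_deriv_eq {F G : ℝ → E} {yx xx : E} (hF : HasDerivAt F yx 0) (hG : HasDerivAt G xx 0)
    (h0 : F 0 = G 0) {v σ : ℕ → ℝ} (hv : ∀ n, 0 < v n) (hv0 : Tendsto v atTop (𝓝 0))
    {c : ℝ} (hρ : Tendsto (fun n => σ n / v n) atTop (𝓝 c))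
    (heq : ∀ n, F (v n) = G (σ n)) : yx = c • xx := by
  have hσ0 : Tendsto σ atTop (𝓝 0) := by
    have h := hρ.mul hv0
    rw [mul_zero] at h
    exact h.congr fun n => div_mul_cancel₀ _ (hv n).ne'
  -- slope of F along v n tends to yx
  have hvne : Tendsto v atTop (𝓝[≠] (0:ℝ)) :=
    tendsto_nhdsWithin_of_tendsto_nhds_of_eventually_within _ hv0
      (Eventually.of_forall fun n => (hv n).ne')
  have hA : Tendsto (fun n => (v n)⁻¹ • (F (v n) - F 0)) atTop (𝓝 yx) := by
    have := (hasDerivAt_iff_tendsto_slope.mp hF).comp hvne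
    refine this.congr fun n => ?_
    simp [slope_def_module]
  -- the little-o error of G along σ n, rescaled by v n, tends to 0
  have hB : Tendsto (fun n => (v n)⁻¹ • (G (σ n) - G 0 - σ n • xx)) atTop (𝓝 0) := by
    have hlo := (hasDerivAt_iff_isLittleO.mp hG).comp_tendsto hσ0
    rw [NormedAddCommGroup.tendsto_nhds_zero]
    intro ε hε
    have hεc : 0 < ε / (2 * (|c| + 1)) := by positivity
    have h1 : ∀ᶠ n in atTop, ‖G (σ n) - G 0 - (σ n - 0) • xx‖ ≤ ε / (2 * (|c| + 1)) * ‖σ n - 0‖ :=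
      hlo.def hεc
    have h2 : ∀ᶠ n in atTop, |σ n / v n| < |c| + 1 :=
      hρ.abs.eventually_lt_const (by linarith)
    filter_upwards [h1, h2] with n h1n h2n
    have hvn := hv n
    have hσle : |σ n| ≤ (|c| + 1) * v n := by
      have h3 : |σ n| / v n < |c| + 1 := by rwa [abs_div, abs_of_pos hvn] at h2n
      exact ((div_le_iff₀ hvn).mp h3.le)
    simp only [sub_zero] at h1n
    rw [norm_smul, norm_inv, Real.norm_eq_abs, abs_of_pos hvn]
    calc (v n)⁻¹ * ‖G (σ n) - G 0 - σ n • xx‖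
        ≤ (v n)⁻¹ * (ε / (2 * (|c| + 1)) * |σ n|) := by
          apply mul_le_mul_of_nonneg_left _ (inv_nonneg.mpr hvn.le)
          simpa [Real.norm_eq_abs] using h1n
      _ ≤ (v n)⁻¹ * (ε / (2 * (|c| + 1)) * ((|c| + 1) * v n)) := by
          apply mul_le_mul_of_nonneg_left _ (inv_nonneg.mpr hvn.le)
          apply mul_le_mul_of_nonneg_left hσle (by positivity)
      _ = ε / 2 := by field_simp
      _ < ε := by linarith
  -- combine
  have hcomb : (fun n => (v n)⁻¹ • (F (v n) - F 0))
      = fun n => (v n)⁻¹ • (G (σ n) - G 0 - σ n • xx) + (σ n / v n) • xx := by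
    funext n
    rw [heq n, h0]
    rw [div_eq_inv_mul, mul_smul]
    module
  rw [hcomb] at hA
  have hA' : Tendsto (fun n => (v n)⁻¹ • (G (σ n) - G 0 - σ n • xx) + (σ n / v n) • xx)
      atTop (𝓝 (0 + c • xx)) := hB.add (hρ.smul_const xx)
  rw [zero_add] at hA'
  exact tendsto_nhds_unique hA hA'

end Calc

section USmall

variable
  {E : Type*} [NormedAddCommGroup E] [NormedSpace ℝ E] [FiniteDimensional ℝ E]
  {H : Type*} [TopologicalSpace H] {I : ModelWithCorners ℝ E H}
  {M : Type*} [MetricSpace M] [ChartedSpace H M] [IsManifold I (⊤ : ℕ∞) M]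

lemma hasDerivAt_extChartAt_comp'' {v : (x : M) → TangentSpace I x} {γ : ℝ → M} {x₀ : M} {t : ℝ}
    (hγ : HasMFDerivAt 𝓘(ℝ, ℝ) I γ t ((1 : ℝ →L[ℝ] ℝ).smulRight <| v (γ t)))
    (hsrc : γ t ∈ (chartAt H x₀).source) :
    HasDerivAt ((extChartAt I x₀) ∘ γ)
      (tangentCoordChange I (γ t) x₀ (γ t) (v (γ t))) t := by
  rw [hasDerivAt_iff_hasFDerivAt]
  apply hasMFDerivAt_iff_hasFDerivAt.mp
  apply (HasMFDerivAt.comp t (hasMFDerivAt_extChartAt (I := I) hsrc) hγ).congr_mfderiv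
  erw [mfderiv_chartAt_eq_tangentCoordChange hsrc]
  refine ContinuousLinearMap.ext fun a => ?_
  exact map_smul (tangentCoordChange I (γ t) x₀ (γ t)) (show ℝ from a) (v (γ t))

lemma continuousOn_tangentRep' {Y : (x : M) → TangentSpace I x}
    (hYc : Continuous (fun x => (⟨x, Y x⟩ : TangentBundle I M))) (z₀ : M) :
    ContinuousOn (fun z => tangentCoordChange I z z₀ z (Y z) : M → E) (chartAt H z₀).source := by
  have h1 : ContinuousOn (fun z => (trivializationAt E (TangentSpace I) z₀
      (⟨z, Y z⟩ : TangentBundle I M)).2) (chartAt H z₀).source := by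
    apply continuous_snd.comp_continuousOn
    apply (trivializationAt E (TangentSpace I) z₀).continuousOn.comp hYc.continuousOn
    intro z hz
    rw [Bundle.Trivialization.mem_source]
    exact hz
  exact h1.congr fun z hz => rfl

lemma tangentSpace_congr {Y : (x : M) → TangentSpace I x} {a b : M} (h : a = b) :
    (Y a : E) = (Y b : E) := by subst h; rfl

lemma local_small
    {Y : (x : M) → TangentSpace I x}
    (hYc : Continuous (fun x => (⟨x, Y x⟩ : TangentBundle I M)))
    {ψ : ℝ → M → M}
    (hψ0 : ∀ z, ψ 0 z = z)
    (hψY : ∀ z t, HasMFDerivAt 𝓘(ℝ, ℝ) I (fun s => ψ s z) t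
      ((1 : ℝ →L[ℝ] ℝ).smulRight (Y (ψ t z))))
    {η : ℝ} (hη : 0 < η) (z₀ : M) :
    ∃ V : Set M, IsOpen V ∧ z₀ ∈ V ∧ ∃ δ > 0, ∀ z ∈ V, ∀ s ∈ Icc (0:ℝ) δ,
      dist z (ψ s z) < η := by
  set e := extChartAt I z₀ with he
  -- a good radius around `e z₀`
  obtain ⟨r₀, hr₀, hr₀sub⟩ := Metric.mem_nhdsWithin_iff.mp
    (extChartAt_target_mem_nhdsWithin (I := I) z₀)
  set r := r₀ / 3 with hr
  have hrpos : 0 < r := by positivity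
  set D := Metric.closedBall (e z₀) (2 * r) ∩ range I with hDdef
  have hDtarget : D ⊆ e.target := by
    rintro a ⟨ha1, ha2⟩
    exact hr₀sub ⟨lt_of_le_of_lt (Metric.mem_closedBall.mp ha1) (by rw [hr]; linarith), ha2⟩
  have hDcompact : IsCompact D :=
    (isCompact_closedBall _ _).inter_right I.isClosed_range
  -- the compact neighbourhood K in M
  set K := e.symm '' D with hKdef
  have hKcompact : IsCompact K :=
    hDcompact.image_of_continuousOn ((continuousOn_extChartAt_symm z₀).mono hDtarget)
  have hKsource : K ⊆ e.source := by
    rintro w ⟨a, ha, rfl⟩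
    exact e.map_target (hDtarget ha)
  have hKmem : ∀ w, w ∈ e.source → e w ∈ D → w ∈ K := by
    intro w hw hew
    exact ⟨e w, hew, e.left_inv hw⟩
  -- the vector field in the chart, with a bound C1 on K
  set Yc : M → E := fun z => tangentCoordChange I z z₀ z (Y z) with hYcdef
  have hYccont : ContinuousOn Yc (chartAt H z₀).source := continuousOn_tangentRep' hYc z₀
  obtain ⟨C0, hC0⟩ := hKcompact.exists_bound_of_continuousOn
    (hYccont.mono (by rw [← extChartAt_source (I := I)]; exact hKsource))
  set C1 := max C0 0 with hC1def
  have hC1 : ∀ w ∈ K, ‖Yc w‖ ≤ C1 := fun w hw => le_max_of_le_left (hC0 w hw)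
  set C' := C1 + 1 with hC'def
  have hC'pos : 0 < C' := by positivity
  -- uniform continuity of e.symm on D
  obtain ⟨ω, hωpos, hω⟩ := Metric.uniformContinuousOn_iff.mp
    (hDcompact.uniformContinuousOn_of_continuous
      ((continuousOn_extChartAt_symm z₀).mono hDtarget)) η hη
  set ρ := min r (ω / 2) with hρdef
  have hρpos : 0 < ρ := lt_min hrpos (by positivity)
  set δ := ρ / C' with hδdef
  have hδpos : 0 < δ := by positivity
  set V := e.source ∩ e ⁻¹' (Metric.ball (e z₀) r) with hVdef
  have hVopen : IsOpen V :=
    (continuousOn_extChartAt z₀).isOpen_inter_preimage (isOpen_extChartAt_source z₀)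
      Metric.isOpen_ball
  have hVz₀ : z₀ ∈ V := ⟨mem_extChartAt_source z₀, by
    simp only [hVdef, mem_preimage]
    exact Metric.mem_ball_self hrpos⟩
  refine ⟨V, hVopen, hVz₀, δ, hδpos, ?_⟩
  intro z hz s hs
  set γ : ℝ → M := fun u => ψ u z with hγdef
  have hγcont : Continuous γ := continuous_iff_continuousAt.mpr fun t => (hψY z t).continuousAt
  have hγ0 : γ 0 = z := hψ0 z
  -- the invariant set
  set Q : ℝ → Prop := fun u => γ u ∈ K ∧ ‖e (γ u) - e z‖ ≤ C' * u with hQdef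
  have hzK : z ∈ K := hKmem z hz.1
    ⟨Metric.closedBall_subset_closedBall (by linarith) (Metric.ball_subset_closedBall hz.2),
      extChartAt_target_subset_range z₀ (e.map_source hz.1)⟩
  have hmain : Icc (0:ℝ) δ ⊆ {u | ∀ t ∈ Icc 0 u, Q t} := by
    apply IsClosed.Icc_subset_of_forall_exists_gt
    · -- closedness
      apply IsSeqClosed.isClosed
      intro xn x hxn hlim
      refine ⟨fun t ht => ?_, (isClosed_Icc.isSeqClosed (fun n => (hxn n).2) hlim : _)⟩
      rcases lt_or_eq_of_le ht.2 with hlt | heq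
      · obtain ⟨n, hn⟩ : ∃ n, t ≤ xn n := by
          by_contra hcon
          push_neg at hcon
          exact absurd (le_of_tendsto hlim (Eventually.of_forall fun n => (hcon n).le)) hlt.not_ge
        exact (hxn n).1 t ⟨ht.1, hn⟩
      · subst heq
        set yn : ℕ → ℝ := fun n => min (xn n) t with hyn
        have hynlim : Tendsto yn atTop (𝓝 t) := by
          have := hlim.min (tendsto_const_nhds (x := t))
          simpa using this
        have hynQ : ∀ n, Q (yn n) := fun n =>
          (hxn n).1 (yn n) ⟨le_min ((hxn n).2.1) ht.1, min_le_left _ _⟩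
        have hγlim : Tendsto (fun n => γ (yn n)) atTop (𝓝 (γ t)) :=
          (hγcont.tendsto t).comp hynlim
        have hKt : γ t ∈ K :=
          hKcompact.isClosed.mem_of_tendsto hγlim (Eventually.of_forall fun n => (hynQ n).1)
        refine ⟨hKt, ?_⟩
        have helim : Tendsto (fun n => e (γ (yn n))) atTop (𝓝 (e (γ t))) := by
          apply ((continuousOn_extChartAt z₀ (γ t) (hKsource hKt)).tendsto).comp
          apply tendsto_nhdsWithin_of_tendsto_nhds_of_eventually_within _ hγlim
          exact Eventually.of_forall fun n => hKsource (hynQ n).1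
        have h1 : Tendsto (fun n => ‖e (γ (yn n)) - e z‖) atTop (𝓝 ‖e (γ t) - e z‖) :=
          (helim.sub tendsto_const_nhds).norm
        have h2 : Tendsto (fun n => C' * yn n) atTop (𝓝 (C' * t)) :=
          hynlim.const_mul _
        exact le_of_tendsto_of_tendsto' h1 h2 fun n => (hynQ n).2
    · -- 0 ∈ s
      intro t ht
      rw [show t = 0 by simpa using le_antisymm ht.2 ht.1]
      refine ⟨by rwa [hγ0], by simp [hγ0]⟩
    · -- extension step
      rintro x ⟨hxP, hx0, hxδ⟩
      have hQx := hxP x ⟨hx0, le_refl x⟩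
      have hxsrc : γ x ∈ (chartAt H z₀).source := by
        rw [← extChartAt_source (I := I)]; exact hKsource hQx.1
      have hd : HasDerivAt (e ∘ γ) (Yc (γ x)) x := hasDerivAt_extChartAt_comp'' (hψY z x) hxsrc
      have hlo := hasDerivAt_iff_isLittleO.mp hd
      have hev1 : ∀ᶠ u in 𝓝 x, ‖e (γ u) - e (γ x) - (u - x) • Yc (γ x)‖ ≤ 1 * ‖u - x‖ :=
        hlo.def one_pos
      have hev2 : ∀ᶠ u in 𝓝 x, γ u ∈ e.source :=
        hγcont.continuousAt.preimage_mem_nhds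
          ((isOpen_extChartAt_source z₀).mem_nhds (hKsource hQx.1))
      obtain ⟨h, hh, hball⟩ := Metric.eventually_nhds_iff_ball.mp (hev1.and hev2)
      intro y hy
      refine ⟨min y (min δ (x + h / 2)), ⟨fun u hu => ?_,
        lt_min hy (lt_min hxδ (by linarith)), min_le_left _ _⟩⟩
      rcases le_or_gt u x with hux | hux
      · exact hxP u ⟨hu.1, hux⟩
      · have huδ' : u ≤ δ := le_trans hu.2 (le_trans (min_le_right _ _) (min_le_left _ _))
        have huball : u ∈ Metric.ball x h := by
          rw [Real.ball_eq_Ioo]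
          constructor
          · linarith
          · have h2 : u ≤ x + h / 2 :=
              le_trans hu.2 (le_trans (min_le_right _ _) (min_le_right _ _))
            linarith
        obtain ⟨hu1, hu2⟩ := hball u huball
        have husrc : γ u ∈ e.source := hu2
        have hnorm : ‖e (γ u) - e z‖ ≤ C' * u := by
          have hYb : ‖Yc (γ x)‖ ≤ C1 := hC1 _ hQx.1
          have h3 : ‖e (γ u) - e (γ x)‖ ≤ (u - x) + (u - x) * C1 := by
            have h4 : ‖e (γ u) - e (γ x)‖
                ≤ ‖e (γ u) - e (γ x) - (u - x) • Yc (γ x)‖ + ‖(u - x) • Yc (γ x)‖ := by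
              have := norm_add_le (e (γ u) - e (γ x) - (u - x) • Yc (γ x)) ((u - x) • Yc (γ x))
              simpa using this
            have h5 : ‖(u - x) • Yc (γ x)‖ ≤ (u - x) * C1 := by
              rw [norm_smul, Real.norm_eq_abs, abs_of_pos (by linarith)]
              exact mul_le_mul_of_nonneg_left hYb (by linarith)
            have h6 : ‖e (γ u) - e (γ x) - (u - x) • Yc (γ x)‖ ≤ (u - x) := by
              have := hu1
              rw [one_mul, Real.norm_eq_abs, abs_of_pos (by linarith : (0:ℝ) < u - x)] at this
              exact this
            calc ‖e (γ u) - e (γ x)‖ ≤ _ + _ := h4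
            _ ≤ (u - x) + (u - x) * C1 := add_le_add h6 h5
          calc ‖e (γ u) - e z‖ ≤ ‖e (γ u) - e (γ x)‖ + ‖e (γ x) - e z‖ := by
                have := norm_add_le (e (γ u) - e (γ x)) (e (γ x) - e z)
                simpa using this
          _ ≤ ((u - x) + (u - x) * C1) + C' * x := add_le_add h3 hQx.2
          _ = C' * u := by rw [hC'def]; ring
        refine ⟨hKmem _ husrc ⟨?_, extChartAt_target_subset_range z₀ (e.map_source husrc)⟩, hnorm⟩
        rw [Metric.mem_closedBall]
        have hCu : C' * u ≤ ρ := by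
          calc C' * u ≤ C' * δ := mul_le_mul_of_nonneg_left huδ' hC'pos.le
          _ = ρ := by rw [hδdef]; field_simp
        have hez : dist (e z) (e z₀) < r := hz.2
        calc dist (e (γ u)) (e z₀) ≤ dist (e (γ u)) (e z) + dist (e z) (e z₀) := dist_triangle _ _ _
        _ ≤ C' * u + r := by
            rw [dist_eq_norm]
            exact add_le_add hnorm hez.le
        _ ≤ ρ + r := by linarith
        _ ≤ 2 * r := by
            have : ρ ≤ r := min_le_left _ _
            linarith
  -- conclude
  have hQs := hmain hs s ⟨hs.1, le_refl s⟩
  have hzsrc : z ∈ e.source := hz.1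
  have hγssrc : γ s ∈ e.source := hKsource hQs.1
  have hzD : e z ∈ D :=
    ⟨Metric.closedBall_subset_closedBall (by linarith) (Metric.ball_subset_closedBall hz.2),
      extChartAt_target_subset_range z₀ (e.map_source hzsrc)⟩
  have hγsD : e (γ s) ∈ D := by
    rcases hQs.1 with ⟨a, ha, haeq⟩
    rw [← haeq, e.right_inv (hDtarget ha)]
    exact ha
  have hdistlt : dist (e z) (e (γ s)) < ω := by
    rw [dist_eq_norm, norm_sub_rev]
    have h1 : C' * s ≤ ρ := by
      calc C' * s ≤ C' * δ := mul_le_mul_of_nonneg_left hs.2 hC'pos.le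
      _ = ρ := by rw [hδdef]; field_simp
    have h2 : ρ ≤ ω / 2 := min_le_right _ _
    calc ‖e (γ s) - e z‖ ≤ C' * s := hQs.2
    _ ≤ ω / 2 := le_trans h1 h2
    _ < ω := by linarith
  have := hω (e z) hzD (e (γ s)) hγsD hdistlt
  rwa [e.left_inv hzsrc, e.left_inv hγssrc] at this

end USmall


section Global

variable
  {E : Type*} [NormedAddCommGroup E] [NormedSpace ℝ E] [FiniteDimensional ℝ E]
  {H : Type*} [TopologicalSpace H] {I : ModelWithCorners ℝ E H}
  {M : Type*} [MetricSpace M] [ChartedSpace H M] [IsManifold I (⊤ : ℕ∞) M]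
  [CompactSpace M]

lemma uniform_small
    {Y : (x : M) → TangentSpace I x}
    (hYc : Continuous (fun x => (⟨x, Y x⟩ : TangentBundle I M)))
    {ψ : ℝ → M → M}
    (hψ0 : ∀ z, ψ 0 z = z)
    (hψadd : ∀ s t z, ψ (s + t) z = ψ s (ψ t z))
    (hψY : ∀ z t, HasMFDerivAt 𝓘(ℝ, ℝ) I (fun s => ψ s z) t
      ((1 : ℝ →L[ℝ] ℝ).smulRight (Y (ψ t z))))
    {η : ℝ} (hη : 0 < η) :
    ∃ δ > 0, ∀ (z : M) (s : ℝ), |s| ≤ δ → dist z (ψ s z) < η := by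
  have hloc := fun z₀ : M => local_small hYc hψ0 hψY hη z₀
  choose V hVopen hVmem δf hδf hVδ using hloc
  rcases isEmpty_or_nonempty M with hM | hM
  · exact ⟨1, one_pos, fun z => (IsEmpty.false z).elim⟩
  obtain ⟨t, -, ht⟩ := isCompact_univ.elim_nhds_subcover V
    (fun z _ => (hVopen z).mem_nhds (hVmem z))
  have htne : t.Nonempty := by
    obtain ⟨z⟩ := hM
    obtain ⟨w, hw, _⟩ := mem_iUnion₂.mp (ht (mem_univ z))
    exact ⟨w, hw⟩
  set δ := t.inf' htne δf with hδdef
  have hδpos : 0 < δ := by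
    rw [hδdef, Finset.lt_inf'_iff]
    exact fun w _ => hδf w
  refine ⟨δ, hδpos, ?_⟩
  have hpos : ∀ (z : M) (s : ℝ), s ∈ Icc 0 δ → dist z (ψ s z) < η := by
    intro z s hs
    obtain ⟨w, hw, hzw⟩ := mem_iUnion₂.mp (ht (mem_univ z))
    exact hVδ w z hzw s ⟨hs.1, le_trans hs.2 (Finset.inf'_le _ hw)⟩
  intro z s hs
  rcases le_or_gt 0 s with h0 | h0
  · exact hpos z s ⟨h0, by rwa [abs_of_nonneg h0] at hs⟩
  · have h1 : ψ (-s) (ψ s z) = z := by rw [← hψadd, neg_add_cancel, hψ0]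
    have h2 := hpos (ψ s z) (-s) ⟨by linarith, by rwa [abs_of_neg h0] at hs⟩
    rw [h1] at h2
    rw [dist_comm]
    exact h2

end Global

section LinAlg

variable {V : Type*} [AddCommGroup V] [Module ℝ V] [FiniteDimensional ℝ V]

lemma finrank_span_single_le (u : V) :
    Module.finrank ℝ (Submodule.span ℝ ({u} : Set V)) ≤ 1 := by
  rcases eq_or_ne u 0 with rfl | hu
  · rw [Submodule.span_zero_singleton]
    simp
  · rw [finrank_span_singleton hu]

lemma finrank_span_pair_le {v w : V} (h : (∃ c : ℝ, w = c • v) ∨ v = 0) :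
    Module.finrank ℝ (Submodule.span ℝ ({v, w} : Set V)) ≤ 1 := by
  rcases h with ⟨c, hc⟩ | rfl
  · have hle : Submodule.span ℝ ({v, w} : Set V) ≤ Submodule.span ℝ ({v} : Set V) := by
      rw [Submodule.span_le]
      rw [Set.insert_subset_iff]
      refine ⟨Submodule.mem_span_singleton_self v, ?_⟩
      rw [Set.singleton_subset_iff, hc]
      exact Submodule.smul_mem _ c (Submodule.mem_span_singleton_self v)
    exact le_trans (Submodule.finrank_mono hle) (finrank_span_single_le v)
  · have hle : Submodule.span ℝ ({0, w} : Set V) ≤ Submodule.span ℝ ({w} : Set V) := by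
      rw [Submodule.span_le]
      rw [Set.insert_subset_iff]
      exact ⟨Submodule.zero_mem _, Set.singleton_subset_iff.mpr
        (Submodule.mem_span_singleton_self w)⟩
    exact le_trans (Submodule.finrank_mono hle) (finrank_span_single_le w)

end LinAlg

/-- A separating `C¹` vector field on a compact manifold has collinear
`C¹`-centralizer: for every `C¹` vector field `Y` commuting with `X` (their flows commute),
`span(X x, Y x)` has dimension at most `1` at every point. -/
theorem stmt_3
    {E : Type*} [NormedAddCommGroup E] [NormedSpace ℝ E] [FiniteDimensional ℝ E]
    {H : Type*} [TopologicalSpace H] {I : ModelWithCorners ℝ E H}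
    {M : Type*} [MetricSpace M] [ChartedSpace H M] [IsManifold I (⊤ : ℕ∞) M]
    [CompactSpace M]
    (X : (x : M) → TangentSpace I x)
    (hX : ContMDiff I I.tangent 1 (fun x => (⟨x, X x⟩ : TangentBundle I M)))
    (φ : ℝ → M → M)
    (hφ0 : ∀ x, φ 0 x = x)
    (hφadd : ∀ s t x, φ (s + t) x = φ s (φ t x))
    (hφX : ∀ x t, HasMFDerivAt 𝓘(ℝ, ℝ) I (fun s => φ s x) t
      ((1 : ℝ →L[ℝ] ℝ).smulRight (X (φ t x))))
    (hsep : ∃ ε > (0 : ℝ), ∀ x y : M,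
      (∀ t : ℝ, dist (φ t x) (φ t y) < ε) → ∃ s : ℝ, y = φ s x) :
    ∀ (Y : (x : M) → TangentSpace I x),
      ContMDiff I I.tangent 1 (fun x => (⟨x, Y x⟩ : TangentBundle I M)) →
      ∀ ψ : ℝ → M → M,
        (∀ x, ψ 0 x = x) →
        (∀ s t x, ψ (s + t) x = ψ s (ψ t x)) →
        (∀ x t, HasMFDerivAt 𝓘(ℝ, ℝ) I (fun s => ψ s x) t
          ((1 : ℝ →L[ℝ] ℝ).smulRight (Y (ψ t x)))) →
        (∀ s t x, ψ s (φ t x) = φ t (ψ s x)) →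
        ∀ x : M,
          Module.finrank ℝ (Submodule.span ℝ ({X x, Y x} : Set (TangentSpace I x))) ≤ 1 := by
  intro Y hY ψ hψ0 hψadd hψY hcomm x
  classical
  obtain ⟨ε, hε, hsep⟩ := hsep
  have hYc : Continuous (fun x => (⟨x, Y x⟩ : TangentBundle I M)) := hY.continuous
  obtain ⟨δ, hδpos, hδ⟩ := uniform_small hYc hψ0 hψadd hψY hε
  have hφcont : Continuous (fun t => φ t x) :=
    continuous_iff_continuousAt.mpr fun t => (hφX x t).continuousAt
  have hψcont : Continuous (fun s => ψ s x) :=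
    continuous_iff_continuousAt.mpr fun t => (hψY x t).continuousAt
  set F : ℝ → E := fun s => extChartAt I x (ψ s x) with hFdef
  set G : ℝ → E := fun t => extChartAt I x (φ t x) with hGdef
  have hFd : HasDerivAt F (Y x) 0 := by
    have h := hasDerivAt_extChartAt_comp'' (I := I) (hψY x 0)
      (by simp only [hψ0]; exact mem_chart_source H x)
    simp only [hψ0] at h
    erw [tangentCoordChange_self (I := I) (mem_extChartAt_source (I := I) x)] at h
    rw [tangentSpace_congr (Y := Y) (hψ0 x)] at h
    exact h
  have hGd : HasDerivAt G (X x) 0 := by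
    have h := hasDerivAt_extChartAt_comp'' (I := I) (hφX x 0)
      (by simp only [hφ0]; exact mem_chart_source H x)
    simp only [hφ0] at h
    erw [tangentCoordChange_self (I := I) (mem_extChartAt_source (I := I) x)] at h
    rw [tangentSpace_congr (Y := X) (hφ0 x)] at h
    exact h
  have hFG0 : F 0 = G 0 := by simp only [hFdef, hGdef, hψ0, hφ0]
  -- every small `ψ`-time lands on the `φ`-orbit of `x`
  have hτ : ∀ s : ℝ, |s| ≤ δ → ∃ τ : ℝ, ψ s x = φ τ x := by
    intro s hs
    apply hsep x (ψ s x)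
    intro t
    rw [← hcomm s t x]
    exact hδ (φ t x) s hs
  -- the closed subgroup of pairs (s, τ) with ψ s x = φ τ x
  set Λ : AddSubgroup (ℝ × ℝ) :=
    { carrier := {p : ℝ × ℝ | ψ p.1 x = φ p.2 x}
      zero_mem' := by simp [hψ0, hφ0]
      add_mem' := by
        rintro ⟨a, b⟩ ⟨a', b'⟩ h1 h2
        simp only [Set.mem_setOf_eq] at h1 h2 ⊢
        calc ψ (a + a') x = ψ a (ψ a' x) := hψadd a a' x
        _ = ψ a (φ b' x) := by rw [h2]
        _ = φ b' (ψ a x) := hcomm a b' x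
        _ = φ b' (φ b x) := by rw [h1]
        _ = φ (b' + b) x := (hφadd b' b x).symm
        _ = φ (b + b') x := by rw [add_comm]
      neg_mem' := by
        rintro ⟨a, b⟩ h1
        simp only [Set.mem_setOf_eq] at h1 ⊢
        have h2 : ψ a (φ (-b) x) = x := by
          rw [hcomm a (-b) x, h1, ← hφadd, neg_add_cancel, hφ0]
        calc ψ (-a) x = ψ (-a) (ψ a (φ (-b) x)) := by rw [h2]
        _ = ψ (-a + a) (φ (-b) x) := (hψadd _ _ _).symm
        _ = φ (-b) x := by rw [neg_add_cancel, hψ0] } with hΛdef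
  have hΛmem : ∀ p : ℝ × ℝ, p ∈ Λ ↔ ψ p.1 x = φ p.2 x := fun p => Iff.rfl
  have hΛclosed : IsClosed (Λ : Set (ℝ × ℝ)) := by
    have heq : (Λ : Set (ℝ × ℝ)) = {p : ℝ × ℝ | ψ p.1 x = φ p.2 x} := rfl
    rw [heq]
    exact isClosed_eq (hψcont.comp continuous_fst) (hφcont.comp continuous_snd)
  -- Baire: find an interval with uniformly bounded return times
  set B : ℕ → Set ℝ := fun n =>
    {s : ℝ | s ∈ Icc 0 δ ∧ ∃ τ ∈ Icc (-(n:ℝ)) (n:ℝ), (s, τ) ∈ Λ} with hBdef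
  have hBclosed : ∀ n, IsClosed (B n) := by
    intro n
    have himg : B n = Prod.fst '' ((Λ : Set (ℝ × ℝ)) ∩ (Icc 0 δ ×ˢ Icc (-(n:ℝ)) (n:ℝ))) := by
      ext s
      constructor
      · rintro ⟨hs, τ, hτ1, hτ2⟩
        exact ⟨(s, τ), ⟨hτ2, hs, hτ1⟩, rfl⟩
      · rintro ⟨⟨s', τ⟩, ⟨hmem, hs, hτm⟩, rfl⟩
        exact ⟨hs, τ, hτm, hmem⟩
    rw [himg]
    exact ((((isCompact_Icc).prod isCompact_Icc).inter_left hΛclosed).image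
      continuous_fst).isClosed
  have hcover : ∀ s : ℝ, s ∈ Icc 0 δ → ∃ n : ℕ, s ∈ B n := by
    intro s hs
    obtain ⟨τ, hτeq⟩ := hτ s (by rw [abs_of_nonneg hs.1]; exact hs.2)
    refine ⟨⌈|τ|⌉₊, hs, τ, ?_, hτeq⟩
    have h1 : |τ| ≤ (⌈|τ|⌉₊ : ℝ) := Nat.le_ceil _
    exact mem_Icc.mpr (abs_le.mp h1)
  haveI : Nonempty (Icc (0:ℝ) δ) := ⟨⟨0, le_refl 0, hδpos.le⟩⟩
  haveI : CompactSpace (Icc (0:ℝ) δ) := isCompact_iff_compactSpace.mp isCompact_Icc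
  obtain ⟨N, hN⟩ := nonempty_interior_of_iUnion_of_closed
    (f := fun n : ℕ => (Subtype.val : Icc (0:ℝ) δ → ℝ) ⁻¹' B n)
    (fun n => (hBclosed n).preimage continuous_subtype_val)
    (by
      ext p
      simp only [mem_iUnion, mem_univ, iff_true, mem_preimage]
      exact hcover p p.2)
  obtain ⟨sb, hsb⟩ := hN
  have hsbmem : (Subtype.val ⁻¹' B N : Set (Icc (0:ℝ) δ)) ∈ 𝓝 sb :=
    mem_interior_iff_mem_nhds.mp hsb
  have hnhds : B N ∈ 𝓝[Icc (0:ℝ) δ] (sb : ℝ) := by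
    rw [← map_nhds_subtype_val]
    exact mem_map.mpr hsbmem
  obtain ⟨h, hh, hball⟩ := Metric.mem_nhdsWithin_iff.mp hnhds
  have hsmem : (sb : ℝ) ∈ Icc 0 δ := sb.2
  set α := max 0 ((sb : ℝ) - h / 2) with hα
  set β := min δ ((sb : ℝ) + h / 2) with hβ
  have hαβ : α < β := by
    apply max_lt
    · exact lt_min hδpos (by nlinarith [hsmem.1])
    · exact lt_min (by nlinarith [hsmem.2]) (by linarith)
  have hsub : Icc α β ⊆ B N := by
    intro u hu
    apply hball
    constructor
    · rw [Metric.mem_ball, Real.dist_eq]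
      have h1 : (sb : ℝ) - h/2 ≤ α := le_max_right _ _
      have h2 : β ≤ (sb : ℝ) + h/2 := min_le_right _ _
      rw [abs_sub_lt_iff]
      constructor
      · linarith [hu.2]
      · linarith [hu.1]
    · exact ⟨le_trans (le_max_left _ _) hu.1, le_trans hu.2 (min_le_left _ _)⟩
  set d := β - α with hddef
  have hdpos : 0 < d := by rw [hddef]; linarith
  have hkey : ∀ u ∈ Icc (0:ℝ) d, ∃ τ : ℝ, |τ| ≤ 2 * N ∧ ((u, τ) : ℝ × ℝ) ∈ Λ := by
    intro u hu
    have hud : u ≤ d := hu.2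
    have h1 : α + u ∈ Icc α β := ⟨by linarith [hu.1], by rw [hddef] at hud; linarith⟩
    obtain ⟨_, τ₁, hτ₁I, hτ₁⟩ := hsub h1
    obtain ⟨_, τ₂, hτ₂I, hτ₂⟩ := hsub (left_mem_Icc.mpr hαβ.le)
    refine ⟨τ₁ - τ₂, ?_, ?_⟩
    · rw [mem_Icc] at hτ₁I hτ₂I
      rw [abs_le]
      constructor
      · linarith [hτ₁I.1, hτ₂I.2]
      · linarith [hτ₁I.2, hτ₂I.1]
    · have hsubm := sub_mem hτ₁ hτ₂
      have heq2 : ((α + u, τ₁) : ℝ × ℝ) - (α, τ₂) = (u, τ₁ - τ₂) := by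
        rw [Prod.mk_sub_mk]
        simp
      rwa [heq2] at hsubm
  -- sequences converging to 0 with bounded return times
  set v0 : ℕ → ℝ := fun n => d / (n + 1) with hv0def
  have hv0pos : ∀ n, 0 < v0 n := fun n => by
    rw [hv0def]
    positivity
  have hv0le : ∀ n, v0 n ≤ d := fun n => by
    rw [hv0def]
    apply div_le_self hdpos.le
    have hn : (0:ℝ) ≤ n := Nat.cast_nonneg n
    linarith
  have hv0lim : Tendsto v0 atTop (𝓝 0) := by
    have h := tendsto_one_div_add_atTop_nhds_zero_nat.const_mul d
    rw [mul_zero] at h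
    exact h.congr fun n => by rw [hv0def]; ring
  have hτ0ex : ∀ n : ℕ, ∃ τ : ℝ, |τ| ≤ 2 * N ∧ ((v0 n, τ) : ℝ × ℝ) ∈ Λ :=
    fun n => hkey (v0 n) ⟨(hv0pos n).le, hv0le n⟩
  choose τ0 hτ0abs hτ0mem using hτ0ex
  obtain ⟨τstar, hτstarI, g, hg, hglim⟩ :=
    (isCompact_Icc (a := -(2*(N:ℝ))) (b := 2*(N:ℝ))).tendsto_subseq
      (fun n => mem_Icc.mpr (abs_le.mp (hτ0abs n)))
  have hv0g : Tendsto (fun n => v0 (g n)) atTop (𝓝 0) := hv0lim.comp hg.tendsto_atTop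
  have hτstarmem : ((0, τstar) : ℝ × ℝ) ∈ Λ := by
    apply hΛclosed.mem_of_tendsto (hv0g.prodMk_nhds hglim)
    exact Eventually.of_forall fun n => hτ0mem (g n)
  set v : ℕ → ℝ := fun n => v0 (g n) with hvdef
  set σ : ℕ → ℝ := fun n => τ0 (g n) - τstar with hσdef
  have hvpos : ∀ n, 0 < v n := fun n => hv0pos _
  have hvlim : Tendsto v atTop (𝓝 0) := hv0g
  have hσlim : Tendsto σ atTop (𝓝 0) := by
    have h2 := hglim.sub_const τstar
    rw [sub_self] at h2
    exact h2
  have hσmem : ∀ n, ((v n, σ n) : ℝ × ℝ) ∈ Λ := by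
    intro n
    have hsubm := sub_mem (hτ0mem (g n)) hτstarmem
    have heq2 : ((v0 (g n), τ0 (g n)) : ℝ × ℝ) - (0, τstar) = (v n, σ n) := by
      rw [Prod.mk_sub_mk]
      simp [hvdef, hσdef]
    rwa [heq2] at hsubm
  -- the dichotomy
  have hdep : (∃ c : ℝ, Y x = c • X x) ∨ X x = 0 := by
    by_cases hcase : ∃ C : ℝ, 0 < C ∧ ∃ᶠ n in atTop, |σ n| ≤ C * v n
    · left
      obtain ⟨C, hCpos, hfreq⟩ := hcase
      obtain ⟨g₂, hg₂, hg₂P⟩ := Filter.extraction_of_frequently_atTop hfreq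
      have hratmem : ∀ n, σ (g₂ n) / v (g₂ n) ∈ Icc (-C) C := by
        intro n
        have h1 := hg₂P n
        have h2 := hvpos (g₂ n)
        rw [mem_Icc]
        constructor
        · rw [le_div_iff₀ h2]
          have h3 := neg_abs_le (σ (g₂ n))
          linarith
        · rw [div_le_iff₀ h2]
          exact le_trans (le_abs_self _) h1
      obtain ⟨c, _, g₃, hg₃, hg₃lim⟩ := isCompact_Icc.tendsto_subseq hratmem
      refine ⟨c, ?_⟩
      have hveq : ∀ n, F (v (g₂ (g₃ n))) = G (σ (g₂ (g₃ n))) := by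
        intro n
        have hm := (hΛmem _).mp (hσmem (g₂ (g₃ n)))
        simp only [hFdef, hGdef]
        exact congrArg (extChartAt I x) hm
      exact seq_deriv_eq hFd hGd hFG0 (fun n => hvpos _)
        (hvlim.comp ((hg₂.comp hg₃).tendsto_atTop)) hg₃lim hveq
    · right
      push_neg at hcase
      have hBig : ∀ C : ℝ, 0 < C → ∀ᶠ n in atTop, C * v n < |σ n| := by
        intro C hC
        have h2 := hcase C hC
        simpa using h2
      have hσne : ∀ᶠ n in atTop, 0 < |σ n| := by
        filter_upwards [hBig 1 one_pos] with n hn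
        have := hvpos n
        nlinarith
      have hratio : Tendsto (fun n => v n / |σ n|) atTop (𝓝 0) := by
        rw [Metric.tendsto_atTop]
        intro ε' hε'
        obtain ⟨Nb, hNb⟩ := Filter.eventually_atTop.mp (hBig (2 / ε') (by positivity))
        refine ⟨Nb, fun n hn => ?_⟩
        have h1 := hNb n hn
        have h2 := hvpos n
        have habs : 0 < |σ n| := lt_trans (by positivity) h1
        rw [Real.dist_eq, sub_zero, abs_of_nonneg (by positivity)]
        rw [div_lt_iff₀ habs]
        have h4 : ε' * (2 / ε' * v n) < ε' * |σ n| := mul_lt_mul_of_pos_left h1 hε'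
        have h3 : ε' * (2 / ε' * v n) = 2 * v n := by field_simp
        linarith
      have hconst : ∀ s : ℝ, x = φ s x := by
        intro s
        set m : ℕ → ℤ := fun n => round (s / σ n) with hmdef
        have hmmem : ∀ n, (((m n : ℝ) * v n, (m n : ℝ) * σ n) : ℝ × ℝ) ∈ Λ := by
          intro n
          have hz := zsmul_mem (hσmem n) (m n)
          have heq3 : (m n) • ((v n, σ n) : ℝ × ℝ) = ((m n : ℝ) * v n, (m n : ℝ) * σ n) := by
            rw [Prod.smul_mk]
            simp [zsmul_eq_mul]
          rwa [heq3] at hz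
        have hm1 : Tendsto (fun n => (m n : ℝ) * σ n) atTop (𝓝 s) := by
          have hb : ∀ᶠ n in atTop, ‖(m n : ℝ) * σ n - s‖ ≤ |σ n| / 2 := by
            filter_upwards [hσne] with n hn
            have hne : σ n ≠ 0 := abs_pos.mp hn
            have h1 : |s / σ n - (m n : ℝ)| ≤ 1 / 2 := abs_sub_round (s / σ n)
            have heq4 : (m n : ℝ) * σ n - s = -((s / σ n - (m n : ℝ)) * σ n) := by
              field_simp
              ring
            rw [Real.norm_eq_abs, heq4, abs_neg, abs_mul]
            calc |s / σ n - (m n : ℝ)| * |σ n| ≤ (1/2) * |σ n| :=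
                  mul_le_mul_of_nonneg_right h1 (abs_nonneg _)
            _ = |σ n| / 2 := by ring
          have hσhalf : Tendsto (fun n => |σ n| / 2) atTop (𝓝 0) := by
            have h5 := hσlim.abs.div_const (2:ℝ)
            simpa using h5
          have h6 := squeeze_zero_norm' hb hσhalf
          have h7 := h6.add_const s
          simpa using h7
        have hm2 : Tendsto (fun n => (m n : ℝ) * v n) atTop (𝓝 0) := by
          have hb : ∀ᶠ n in atTop, ‖(m n : ℝ) * v n‖ ≤ |s| * (v n / |σ n|) + v n := by
            filter_upwards [hσne] with n hn
            have hne : σ n ≠ 0 := abs_pos.mp hn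
            have h2 := hvpos n
            have h1 : |(m n : ℝ)| ≤ |s / σ n| + 1 / 2 := by
              have h3 := abs_sub_round (s / σ n)
              calc |(m n : ℝ)| = |s / σ n - (s / σ n - (m n : ℝ))| := by ring_nf
              _ ≤ |s / σ n| + |s / σ n - (m n : ℝ)| := abs_sub _ _
              _ ≤ |s / σ n| + 1 / 2 := by linarith
            rw [Real.norm_eq_abs, abs_mul, abs_of_pos h2]
            calc |(m n : ℝ)| * v n ≤ (|s / σ n| + 1 / 2) * v n :=
                  mul_le_mul_of_nonneg_right h1 h2.le
            _ = |s| * (v n / |σ n|) + v n / 2 := by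
                rw [abs_div]
                ring
            _ ≤ |s| * (v n / |σ n|) + v n := by linarith
          have hblim : Tendsto (fun n => |s| * (v n / |σ n|) + v n) atTop (𝓝 0) := by
            have h5 := (hratio.const_mul |s|).add hvlim
            simpa using h5
          exact squeeze_zero_norm' hb hblim
        have hlim2 := hm2.prodMk_nhds hm1
        have hmem0 : ((0, s) : ℝ × ℝ) ∈ Λ :=
          hΛclosed.mem_of_tendsto hlim2 (Eventually.of_forall hmmem)
        have h8 : ψ 0 x = φ s x := (hΛmem _).mp hmem0
        rwa [hψ0] at h8
      have hGconst : G = fun _ => extChartAt I x x := by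
        funext τ
        simp only [hGdef]
        rw [← hconst τ]
      have h0d : HasDerivAt G 0 0 := by
        rw [hGconst]
        exact hasDerivAt_const _ _
      exact hGd.unique h0d
  -- conclude
  haveI hfd : FiniteDimensional ℝ (TangentSpace I x) := by
    show FiniteDimensional ℝ E
    infer_instance
  rcases hdep with ⟨c, hc⟩ | hX0
  · exact finrank_span_pair_le (Or.inl ⟨c, hc⟩)
  · rw [hX0]
    exact finrank_span_pair_le (Or.inr rfl)
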